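/- arXiv:2109.12803 — 4 statements merged into one kernel-verified Lean document; each statement's English description precedes it below -/
import Mathlib

section
/- Fix B ∈ ℝ^{p×K} and ε ≥ 0. Then the worst-case expected loss over the Wasserstein ambiguity set equals the regularized empirical loss: sup_{Q ∈ Ω(ε)} ∫ ‖T_B z‖_r dQ(z) = (1/N) ∑_{i=1}^N ‖T_B ẑ_i‖_r + ε · ‖T_B‖, where both sides are interpreted in [0, ∞] (Theorem 1, core identity for a fixed coefficient matrix). -/
open MeasureTheory ENNReal

/-- Transfer the measurable structure of `α` to the type synonym `WithLp r α`. -/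
noncomputable instance WithLp.instMeasurableSpace' (r : ℝ≥0∞) (α : Type*) [m : MeasurableSpace α] :
    MeasurableSpace (WithLp r α) := m.comap WithLp.ofLp

set_option maxHeartbeats 1000000
set_option synthInstance.maxHeartbeats 400000

/-- The sample space `Z = ℝ^p × ℝ^K` with the `ℓ_r` norm. -/
abbrev ZZ (p K : ℕ) (r : ℝ≥0∞) : Type :=
  WithLp r ((PiLp r fun _ : Fin p => ℝ) × (PiLp r fun _ : Fin K => ℝ))

section AuxInstances

variable (p K : ℕ) (r : ℝ≥0∞) [Fact (1 ≤ r)]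

instance auxBorelZ : BorelSpace (ZZ p K r) :=
  inferInstance

instance auxSecondZ : SecondCountableTopology (ZZ p K r) :=
  inferInstance

instance auxBorelPiLp : BorelSpace (PiLp r fun _ : Fin K => ℝ) :=
  inferInstance

instance auxSingZ : MeasurableSingletonClass (ZZ p K r) :=
  inferInstance

instance auxBorelZ2 : BorelSpace (ZZ p K r × ZZ p K r) :=
  inferInstance

instance auxOpensZ2 : OpensMeasurableSpace (ZZ p K r × ZZ p K r) :=
  (auxBorelZ2 p K r).opensMeasurable

instance auxSingZ2 : MeasurableSingletonClass (ZZ p K r × ZZ p K r) :=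
  inferInstance

end AuxInstances

/-- `Measure.map` commutes with finite sums of measures. -/
theorem aux_map_finset_sum {α β : Type*} [MeasurableSpace α] [MeasurableSpace β]
    {f : α → β} (hf : Measurable f) {ι : Type*} (s : Finset ι) (μ : ι → Measure α) :
    (∑ i ∈ s, μ i).map f = ∑ i ∈ s, (μ i).map f := by
  classical
  induction s using Finset.cons_induction with
  | empty => simp
  | cons a s ha ih =>
      rw [Finset.sum_cons, Finset.sum_cons, Measure.map_add _ _ hf, ih]

/-- Integral against an empirical-type measure. -/
theorem aux_lintegral_emp {α : Type*} [MeasurableSpace α] [MeasurableSingletonClass α]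
    {N : ℕ} (z : Fin N → α) (c : ℝ≥0∞) (f : α → ℝ≥0∞) :
    ∫⁻ x, f x ∂(c • ∑ i, Measure.dirac (z i)) = c * ∑ i, f (z i) := by
  rw [lintegral_smul_measure, lintegral_finset_sum_measure]
  simp [lintegral_dirac]

/-- Integral against a two-point-mixture empirical measure. -/
theorem aux_lintegral_mix {α : Type*} [MeasurableSpace α] [MeasurableSingletonClass α]
    {N : ℕ} (z w : Fin N → α) (m a b : ℝ≥0∞) (f : α → ℝ≥0∞) :
    ∫⁻ x, f x ∂(m • ∑ i, (a • Measure.dirac (z i) + b • Measure.dirac (w i)))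
      = m * ∑ i, (a * f (z i) + b * f (w i)) := by
  rw [lintegral_smul_measure, lintegral_finset_sum_measure]
  simp [lintegral_add_measure, lintegral_smul_measure, lintegral_dirac]

/-- `ofReal ‖a‖ = ‖a‖₊` (removed from Mathlib under this name). -/
theorem ofReal_norm_eq_coe_nnnorm {E : Type*} [SeminormedAddGroup E] (a : E) :
    ENNReal.ofReal ‖a‖ = (‖a‖₊ : ℝ≥0∞) :=
  ENNReal.ofReal_eq_coe_nnreal _

theorem stmt0
    (p K N : ℕ) (hp : 1 ≤ p) (hK : 1 ≤ K) (hN : 1 ≤ N)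
    (r : ℝ≥0∞) [Fact (1 ≤ r)] (hr' : r ≠ ∞)
    (B : Matrix (Fin p) (Fin K) ℝ)
    (ε : ℝ) (hε : 0 ≤ ε)
    -- `T` is the continuous linear map `T_B (x, θ) = θ - Bᵀ x` on
    -- `Z = ℝ^p × ℝ^K` equipped with the `ℓ_r` norm, mapping into `ℝ^K` with the `ℓ_r` norm
    (T : WithLp r ((PiLp r fun _ : Fin p => ℝ) × (PiLp r fun _ : Fin K => ℝ)) →L[ℝ]
         (PiLp r fun _ : Fin K => ℝ))
    (hT : ∀ z, (WithLp.equiv r _) (T z) =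
        (WithLp.equiv r _) ((WithLp.equiv r _ z).2) -
          Matrix.mulVec B.transpose ((WithLp.equiv r _) ((WithLp.equiv r _ z).1)))
    -- training samples
    (zhat : Fin N → WithLp r ((PiLp r fun _ : Fin p => ℝ) × (PiLp r fun _ : Fin K => ℝ))) :
    (⨆ (Q : Measure (WithLp r ((PiLp r fun _ : Fin p => ℝ) × (PiLp r fun _ : Fin K => ℝ))))
      (_ : IsProbabilityMeasure Q ∧
        ∃ Pl : Measure ((WithLp r ((PiLp r fun _ : Fin p => ℝ) × (PiLp r fun _ : Fin K => ℝ))) ×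
            (WithLp r ((PiLp r fun _ : Fin p => ℝ) × (PiLp r fun _ : Fin K => ℝ)))),
          IsProbabilityMeasure Pl ∧
          Pl.map Prod.fst = Q ∧
          Pl.map Prod.snd = (N : ℝ≥0∞)⁻¹ • ∑ i, Measure.dirac (zhat i) ∧
          ∫⁻ w, (‖w.1 - w.2‖₊ : ℝ≥0∞) ∂Pl ≤ ENNReal.ofReal ε),
      ∫⁻ z, (‖T z‖₊ : ℝ≥0∞) ∂Q)
    = (N : ℝ≥0∞)⁻¹ * ∑ i, (‖T (zhat i)‖₊ : ℝ≥0∞) + ENNReal.ofReal ε * (‖T‖₊ : ℝ≥0∞) := by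
  classical
  have hmeas : Measurable fun z : ZZ p K r => (‖T z‖₊ : ℝ≥0∞) :=
    T.continuous.measurable.enorm
  have hNR : (0:ℝ) < N := by exact_mod_cast hN
  have hNne : (N : ℝ≥0∞) ≠ 0 := by
    simpa using (Nat.one_le_iff_ne_zero.mp hN)
  have hNinv : ((N : ℝ≥0∞))⁻¹ = ENNReal.ofReal ((N:ℝ)⁻¹) := by
    rw [ENNReal.ofReal_inv_of_pos hNR, ENNReal.ofReal_natCast]
  apply le_antisymm
  · -- upper bound
    refine iSup₂_le fun Q hQ => ?_
    obtain ⟨hQP, Pl, hPlP, hfst, hsnd, hcost⟩ := hQ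
    have hmeas2 : Measurable fun w : ZZ p K r × ZZ p K r => (‖T w.2‖₊ : ℝ≥0∞) :=
      (T.continuous.comp continuous_snd).measurable.enorm
    have hpt : ∀ w : ZZ p K r × ZZ p K r,
        (‖T w.1‖₊ : ℝ≥0∞) ≤ (‖T w.2‖₊ : ℝ≥0∞) + (‖T‖₊ : ℝ≥0∞) * (‖w.1 - w.2‖₊ : ℝ≥0∞) := by
      intro w
      have h2 : ‖T w.1‖₊ ≤ ‖T w.2‖₊ + ‖T‖₊ * ‖w.1 - w.2‖₊ := by
        have e : T w.1 = T w.2 + T (w.1 - w.2) := by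
          rw [map_sub]; abel
        calc ‖T w.1‖₊ = ‖T w.2 + T (w.1 - w.2)‖₊ := by rw [← e]
          _ ≤ ‖T w.2‖₊ + ‖T (w.1 - w.2)‖₊ := nnnorm_add_le _ _
          _ ≤ ‖T w.2‖₊ + ‖T‖₊ * ‖w.1 - w.2‖₊ := by
              gcongr
              exact T.le_opNNNorm _
      exact_mod_cast h2
    calc ∫⁻ z, (‖T z‖₊ : ℝ≥0∞) ∂Q
        = ∫⁻ w, (‖T w.1‖₊ : ℝ≥0∞) ∂Pl := by
          rw [← hfst, lintegral_map hmeas measurable_fst]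
      _ ≤ ∫⁻ w, ((‖T w.2‖₊ : ℝ≥0∞) + (‖T‖₊ : ℝ≥0∞) * (‖w.1 - w.2‖₊ : ℝ≥0∞)) ∂Pl :=
          lintegral_mono hpt
      _ = ∫⁻ w, (‖T w.2‖₊ : ℝ≥0∞) ∂Pl
            + ∫⁻ w, (‖T‖₊ : ℝ≥0∞) * (‖w.1 - w.2‖₊ : ℝ≥0∞) ∂Pl :=
          lintegral_add_left hmeas2 _
      _ = (N : ℝ≥0∞)⁻¹ * ∑ i, (‖T (zhat i)‖₊ : ℝ≥0∞)
            + (‖T‖₊ : ℝ≥0∞) * ∫⁻ w, (‖w.1 - w.2‖₊ : ℝ≥0∞) ∂Pl := by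
          rw [lintegral_const_mul' _ _ ENNReal.coe_ne_top]
          congr 1
          rw [← lintegral_map hmeas measurable_snd, hsnd, aux_lintegral_emp]
      _ ≤ (N : ℝ≥0∞)⁻¹ * ∑ i, (‖T (zhat i)‖₊ : ℝ≥0∞)
            + ENNReal.ofReal ε * (‖T‖₊ : ℝ≥0∞) := by
          rw [mul_comm (ENNReal.ofReal ε)]
          exact add_le_add_right (mul_le_mul_right hcost _) _
  · -- lower bound
    refine ENNReal.le_of_forall_pos_le_add fun δ hδ _ => ?_
    have hδ' : (0:ℝ) < (δ:ℝ) := hδ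
    set M : ℝ := ‖T‖ with hMdEf
    have hM0 : (0:ℝ) ≤ M := norm_nonneg _
    set η : ℝ := (δ:ℝ) / (2*(ε+1)) with hηdef
    have hη : 0 < η := div_pos hδ' (by linarith)
    obtain ⟨v, hv1, hv2⟩ := T.exists_lt_apply_of_lt_opNorm (show M - η < ‖T‖ by
      simp only [hMdEf]; linarith)
    have hv0 : (0:ℝ) ≤ ‖v‖ := norm_nonneg v
    set Sr : ℝ := (N:ℝ)⁻¹ * ∑ i, ‖T (zhat i)‖ with hSrdef
    have hSr0 : 0 ≤ Sr := by
      apply mul_nonneg (by positivity)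
      exact Finset.sum_nonneg fun i _ => norm_nonneg _
    set lam : ℝ := min (1/2) ((δ:ℝ) / (4*(Sr+1))) with hlamdef
    have hlam0 : 0 < lam := lt_min (by norm_num) (div_pos hδ' (by linarith))
    have hlam1 : lam ≤ 1/2 := min_le_left _ _
    set c : ℝ := ε / lam with hcdef
    have hc0 : 0 ≤ c := div_nonneg hε hlam0.le
    have hlc : lam * c = ε := by
      rw [hcdef]; field_simp
    set a : ℝ≥0∞ := ENNReal.ofReal (1 - lam) with hadef
    set b : ℝ≥0∞ := ENNReal.ofReal lam with hbdef
    have hsum1 : a + b = 1 := by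
      rw [hadef, hbdef, ← ENNReal.ofReal_add (by linarith) hlam0.le]
      norm_num
    set Q : Measure (ZZ p K r) := (N:ℝ≥0∞)⁻¹ •
      ∑ i, (a • Measure.dirac (zhat i) + b • Measure.dirac (zhat i + c • v)) with hQdef
    set Pl : Measure (ZZ p K r × ZZ p K r) := (N:ℝ≥0∞)⁻¹ •
      ∑ i, (a • Measure.dirac ((zhat i, zhat i) : ZZ p K r × ZZ p K r)
            + b • Measure.dirac ((zhat i + c • v, zhat i) : ZZ p K r × ZZ p K r)) with hPldef
    have hPlprob : IsProbabilityMeasure Pl := by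
      constructor
      rw [← lintegral_one, hPldef, aux_lintegral_mix]
      simp only [mul_one, hsum1, Finset.sum_const, Finset.card_univ, Fintype.card_fin,
        nsmul_eq_mul, mul_one]
      exact ENNReal.inv_mul_cancel hNne (ENNReal.natCast_ne_top N)
    have hmap : ∀ (g : ZZ p K r × ZZ p K r → ZZ p K r), Measurable g →
        Pl.map g = (N:ℝ≥0∞)⁻¹ •
          ∑ i, (a • Measure.dirac (g (zhat i, zhat i))
                + b • Measure.dirac (g (zhat i + c • v, zhat i))) := by
      intro g hg
      rw [hPldef, Measure.map_smul, aux_map_finset_sum hg]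
      congr 1
      refine Finset.sum_congr rfl fun i _ => ?_
      rw [Measure.map_add _ _ hg, Measure.map_smul, Measure.map_smul,
        Measure.map_dirac' hg, Measure.map_dirac' hg]
    have hfst : Pl.map Prod.fst = Q := hmap Prod.fst measurable_fst
    have hsnd : Pl.map Prod.snd = (N : ℝ≥0∞)⁻¹ • ∑ i, Measure.dirac (zhat i) := by
      rw [hmap Prod.snd measurable_snd]
      congr 1
      refine Finset.sum_congr rfl fun i _ => ?_
      rw [← add_smul, hsum1, one_smul]
    have hQprob : IsProbabilityMeasure Q := by
      rw [← hfst]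
      exact Measure.isProbabilityMeasure_map measurable_fst.aemeasurable
    have hcost : ∫⁻ w, (‖w.1 - w.2‖₊ : ℝ≥0∞) ∂Pl ≤ ENNReal.ofReal ε := by
      rw [hPldef, aux_lintegral_mix]
      have hcancel : ∀ i : Fin N, zhat i + c • v - zhat i = c • v := fun i => by abel
      simp only [sub_self, nnnorm_zero, ENNReal.coe_zero, mul_zero, zero_add, hcancel]
      rw [Finset.sum_const, Finset.card_univ, Fintype.card_fin, nsmul_eq_mul,
        ← mul_assoc, ENNReal.inv_mul_cancel hNne (ENNReal.natCast_ne_top N), one_mul]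
      rw [hbdef, ← ofReal_norm_eq_coe_nnnorm, ← ENNReal.ofReal_mul hlam0.le]
      apply ENNReal.ofReal_le_ofReal
      have : ‖c • v‖ = c * ‖v‖ := by
        rw [norm_smul, Real.norm_of_nonneg hc0]
      rw [this, ← mul_assoc, hlc]
      nlinarith [hv1.le]
    -- the integral of the constructed measure
    have hI : ∫⁻ z, (‖T z‖₊ : ℝ≥0∞) ∂Q
        = (N:ℝ≥0∞)⁻¹ * ∑ i, (a * (‖T (zhat i)‖₊ : ℝ≥0∞)
            + b * (‖T (zhat i + c • v)‖₊ : ℝ≥0∞)) := by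
      rw [hQdef, aux_lintegral_mix]
    -- real-valued version of the integral
    set Ir : ℝ := (N:ℝ)⁻¹ * ∑ i, ((1 - lam) * ‖T (zhat i)‖ + lam * ‖T (zhat i + c • v)‖)
      with hIrdef
    have hI' : ∫⁻ z, (‖T z‖₊ : ℝ≥0∞) ∂Q = ENNReal.ofReal Ir := by
      rw [hI, hIrdef, hNinv, ENNReal.ofReal_mul (by positivity)]
      congr 1
      rw [ENNReal.ofReal_sum_of_nonneg (fun i _ =>
        add_nonneg (mul_nonneg (by linarith) (norm_nonneg _))
          (mul_nonneg hlam0.le (norm_nonneg _)))]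
      refine Finset.sum_congr rfl fun i _ => ?_
      rw [ENNReal.ofReal_add (mul_nonneg (by linarith) (norm_nonneg _))
          (mul_nonneg hlam0.le (norm_nonneg _)),
        ENNReal.ofReal_mul (by linarith), ENNReal.ofReal_mul hlam0.le,
        ofReal_norm_eq_coe_nnnorm, ofReal_norm_eq_coe_nnnorm, hadef, hbdef]
    -- LHS as ofReal
    have hLHS : (N : ℝ≥0∞)⁻¹ * ∑ i, (‖T (zhat i)‖₊ : ℝ≥0∞) + ENNReal.ofReal ε * (‖T‖₊ : ℝ≥0∞)
        = ENNReal.ofReal (Sr + ε * M) := by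
      rw [ENNReal.ofReal_add hSr0 (mul_nonneg hε hM0), hSrdef,
        ENNReal.ofReal_mul (by positivity), ← hNinv,
        ENNReal.ofReal_sum_of_nonneg (fun i _ => norm_nonneg _),
        ENNReal.ofReal_mul hε, ofReal_norm_eq_coe_nnnorm]
      congr 2
      exact Finset.sum_congr rfl fun i _ => (ofReal_norm_eq_coe_nnnorm _).symm
    -- real inequality
    have hpti : ∀ i : Fin N, c * ‖T v‖ - ‖T (zhat i)‖ ≤ ‖T (zhat i + c • v)‖ := by
      intro i
      have e : T (zhat i + c • v) = T (zhat i) + c • T v := by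
        rw [map_add]
        congr 1
        exact T.map_smul c v
      have h := norm_sub_norm_le (c • T v) (- T (zhat i))
      rw [sub_neg_eq_add, norm_neg, norm_smul, Real.norm_of_nonneg hc0] at h
      rw [e, add_comm]
      linarith
    have hsum_le : ∑ i : Fin N, ((1-lam) * ‖T (zhat i)‖ + lam * (c * ‖T v‖ - ‖T (zhat i)‖))
        ≤ ∑ i : Fin N, ((1-lam) * ‖T (zhat i)‖ + lam * ‖T (zhat i + c • v)‖) :=
      Finset.sum_le_sum fun i _ =>
        add_le_add_right (mul_le_mul_of_nonneg_left (hpti i) hlam0.le) _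
    have hsum_eq : ∑ i : Fin N, ((1-lam) * ‖T (zhat i)‖ + lam * (c * ‖T v‖ - ‖T (zhat i)‖))
        = (1 - 2*lam) * (∑ i : Fin N, ‖T (zhat i)‖) + (N:ℝ) * (lam * (c * ‖T v‖)) := by
      calc ∑ i : Fin N, ((1-lam) * ‖T (zhat i)‖ + lam * (c * ‖T v‖ - ‖T (zhat i)‖))
          = ∑ i : Fin N, ((1 - 2*lam) * ‖T (zhat i)‖ + lam * (c * ‖T v‖)) :=
            Finset.sum_congr rfl fun i _ => by ring
        _ = _ := by
            rw [Finset.sum_add_distrib, ← Finset.mul_sum, Finset.sum_const,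
              Finset.card_univ, Fintype.card_fin, nsmul_eq_mul]
    have hIr1 : (1 - 2*lam) * Sr + ε * ‖T v‖ ≤ Ir := by
      have h1 := mul_le_mul_of_nonneg_left hsum_le (by positivity : (0:ℝ) ≤ (N:ℝ)⁻¹)
      rw [hsum_eq] at h1
      calc (1 - 2*lam) * Sr + ε * ‖T v‖
          = (N:ℝ)⁻¹ * ((1 - 2*lam) * (∑ i : Fin N, ‖T (zhat i)‖)
              + (N:ℝ) * (lam * (c * ‖T v‖))) := by
            rw [hSrdef, ← hlc]
            have hN0 : (N:ℝ) ≠ 0 := hNR.ne'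
            field_simp
        _ ≤ Ir := by rw [hIrdef]; exact h1
    have h2l : 2 * lam * Sr ≤ (δ:ℝ)/2 := by
      have h1 : lam ≤ (δ:ℝ) / (4*(Sr+1)) := min_le_right _ _
      have h2 : lam * Sr ≤ (δ:ℝ) / (4*(Sr+1)) * Sr :=
        mul_le_mul_of_nonneg_right h1 hSr0
      have h3 : (δ:ℝ) / (4*(Sr+1)) * Sr ≤ (δ:ℝ)/4 := by
        rw [div_mul_eq_mul_div, div_le_div_iff₀ (by linarith) (by norm_num)]
        nlinarith
      linarith
    have hεη : ε * η ≤ (δ:ℝ)/2 := by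
      rw [hηdef]
      rw [mul_div_assoc', div_le_div_iff₀ (by linarith) (by norm_num)]
      nlinarith
    have hreal : Sr + ε * M ≤ Ir + (δ:ℝ) := by
      have h4 : ε * (M - η) ≤ ε * ‖T v‖ := mul_le_mul_of_nonneg_left hv2.le hε
      nlinarith [hIr1]
    -- assemble
    have hfinal : (N : ℝ≥0∞)⁻¹ * ∑ i, (‖T (zhat i)‖₊ : ℝ≥0∞)
        + ENNReal.ofReal ε * (‖T‖₊ : ℝ≥0∞) ≤ ∫⁻ z, (‖T z‖₊ : ℝ≥0∞) ∂Q + δ := by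
      rw [hLHS, hI']
      calc ENNReal.ofReal (Sr + ε * M) ≤ ENNReal.ofReal (Ir + (δ:ℝ)) :=
            ENNReal.ofReal_le_ofReal hreal
        _ = ENNReal.ofReal Ir + ENNReal.ofReal (δ:ℝ) := by
            have hIr0 : 0 ≤ Ir := by
              rw [hIrdef]
              apply mul_nonneg (by positivity)
              refine Finset.sum_nonneg fun i _ =>
                add_nonneg (mul_nonneg (by linarith) (norm_nonneg _))
                  (mul_nonneg hlam0.le (norm_nonneg _))
            rw [ENNReal.ofReal_add hIr0 hδ'.le]
        _ = ENNReal.ofReal Ir + (δ : ℝ≥0∞) := by rw [ENNReal.ofReal_coe_nnreal]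
    refine hfinal.trans (add_le_add_left ?_ _)
    exact le_iSup₂ (f := fun (Q : Measure (ZZ p K r)) _ => ∫⁻ z, (‖T z‖₊ : ℝ≥0∞) ∂Q) Q
      ⟨hQprob, Pl, hPlprob, hfst, hsnd, hcost⟩
end

section
/- For every ε ≥ 0, the distributionally robust multi-output regression problem and its regularized empirical counterpart have equal optimal values: inf_{B ∈ ℝ^{p×K}} sup_{Q ∈ Ω(ε)} ∫ ‖θ − Bᵀx‖_r dQ(x, θ) = inf_{B ∈ ℝ^{p×K}} [ (1/N) ∑_{i=1}^N ‖θ̂_i − Bᵀx̂_i‖_r + ε · ‖T_B‖ ], where both inner expressions are interpreted in [0, ∞] and ẑ_i = (x̂_i, θ̂_i) (Theorem 1). -/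
open MeasureTheory ENNReal NNReal

private lemma key {Z E : Type*} [NormedAddCommGroup Z] [NormedSpace ℝ Z]
    [NormedAddCommGroup E] [NormedSpace ℝ E]
    [MeasurableSpace Z] [BorelSpace Z] [SecondCountableTopology Z]
    (f : Z →L[ℝ] E) {N : ℕ} (hN : 1 ≤ N) (zhat : Fin N → Z) (ε : ℝ) (hε : 0 ≤ ε) :
    (⨆ (Q : Measure Z)
        (_ : IsProbabilityMeasure Q ∧
          ∃ Pl : Measure (Z × Z),
            IsProbabilityMeasure Pl ∧
            Pl.map Prod.fst = Q ∧
            Pl.map Prod.snd = (N : ℝ≥0∞)⁻¹ • ∑ i, Measure.dirac (zhat i) ∧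
            ∫⁻ w, (‖w.1 - w.2‖₊ : ℝ≥0∞) ∂Pl ≤ ENNReal.ofReal ε),
        ∫⁻ z, (‖f z‖₊ : ℝ≥0∞) ∂Q)
    = (N : ℝ≥0∞)⁻¹ * ∑ i, (‖f (zhat i)‖₊ : ℝ≥0∞) + ENNReal.ofReal ε * (‖f‖₊ : ℝ≥0∞) := by
  have hN0 : (N : ℝ≥0∞) ≠ 0 := by exact_mod_cast Nat.one_le_iff_ne_zero.mp hN  -- fix later
  have hNt : (N : ℝ≥0∞) ≠ ∞ := natCast_ne_top N
  have hNinv : (N : ℝ≥0∞)⁻¹ * (N : ℝ≥0∞) = 1 := ENNReal.inv_mul_cancel hN0 hNt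
  have hm : Measurable fun z : Z => (‖f z‖₊ : ℝ≥0∞) := measurable_coe_nnreal_ennreal.comp f.continuous.nnnorm.measurable
  have hm2 : Measurable fun w : Z × Z => (‖w.1 - w.2‖₊ : ℝ≥0∞) :=
    measurable_coe_nnreal_ennreal.comp (continuous_fst.sub continuous_snd).nnnorm.measurable
  set C : ℝ≥0∞ := (N : ℝ≥0∞)⁻¹ * ∑ i, (‖f (zhat i)‖₊ : ℝ≥0∞) with hCdef
  have hCt : C ≠ ∞ := by
    refine ENNReal.mul_ne_top (ENNReal.inv_ne_top.mpr hN0) ?_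
    exact (ENNReal.sum_lt_top.mpr fun i _ => ENNReal.coe_lt_top).ne
  -- integral against the empirical measure
  have hemp : ∀ g : Z → ℝ≥0∞, Measurable g →
      ∫⁻ z, g z ∂((N : ℝ≥0∞)⁻¹ • ∑ i, Measure.dirac (zhat i)) =
        (N : ℝ≥0∞)⁻¹ * ∑ i, g (zhat i) := by
    intro g hg
    rw [lintegral_smul_measure, lintegral_finset_sum_measure]
    simp_rw [lintegral_dirac' _ hg, smul_eq_mul]
  apply le_antisymm
  · -- upper bound
    refine iSup_le fun Q => iSup_le ?_
    rintro ⟨hQ, Pl, hPl, hfst, hsnd, hcost⟩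
    have h1 : ∫⁻ z, (‖f z‖₊ : ℝ≥0∞) ∂Q = ∫⁻ w, (‖f w.1‖₊ : ℝ≥0∞) ∂Pl := by
      rw [← hfst, lintegral_map hm measurable_fst]
    rw [h1]
    have hpt : ∀ w : Z × Z, (‖f w.1‖₊ : ℝ≥0∞) ≤
        (‖f w.2‖₊ : ℝ≥0∞) + (‖f‖₊ : ℝ≥0∞) * (‖w.1 - w.2‖₊ : ℝ≥0∞) := by
      intro w
      have h2 : ‖f w.1‖₊ ≤ ‖f w.2‖₊ + ‖f (w.1 - w.2)‖₊ := by
        calc ‖f w.1‖₊ = ‖f w.2 + (f w.1 - f w.2)‖₊ := by rw [show f w.2 + (f w.1 - f w.2) = f w.1 from by abel]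
          _ ≤ ‖f w.2‖₊ + ‖f w.1 - f w.2‖₊ := nnnorm_add_le _ _
          _ = ‖f w.2‖₊ + ‖f (w.1 - w.2)‖₊ := by rw [map_sub]
      calc (‖f w.1‖₊ : ℝ≥0∞) ≤ (‖f w.2‖₊ : ℝ≥0∞) + (‖f (w.1 - w.2)‖₊ : ℝ≥0∞) := by
            exact_mod_cast h2
        _ ≤ (‖f w.2‖₊ : ℝ≥0∞) + (‖f‖₊ : ℝ≥0∞) * (‖w.1 - w.2‖₊ : ℝ≥0∞) := by
            gcongr
            exact_mod_cast f.le_opNNNorm _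
    calc ∫⁻ w, (‖f w.1‖₊ : ℝ≥0∞) ∂Pl
        ≤ ∫⁻ w, ((‖f w.2‖₊ : ℝ≥0∞) + (‖f‖₊ : ℝ≥0∞) * (‖w.1 - w.2‖₊ : ℝ≥0∞)) ∂Pl :=
          lintegral_mono hpt
      _ ≤ (∫⁻ w, (‖f w.2‖₊ : ℝ≥0∞) ∂Pl) +
            ∫⁻ w, (‖f‖₊ : ℝ≥0∞) * (‖w.1 - w.2‖₊ : ℝ≥0∞) ∂Pl := le_of_eq (lintegral_add_left (hm.comp measurable_snd) _)
      _ ≤ C + ENNReal.ofReal ε * (‖f‖₊ : ℝ≥0∞) := by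
          gcongr
          · rw [← lintegral_map hm measurable_snd, hsnd, hemp _ hm]
          · rw [lintegral_const_mul' _ _ coe_ne_top, mul_comm]
            gcongr

  · -- lower bound
    set S := (⨆ (Q : Measure Z)
        (_ : IsProbabilityMeasure Q ∧
          ∃ Pl : Measure (Z × Z),
            IsProbabilityMeasure Pl ∧
            Pl.map Prod.fst = Q ∧
            Pl.map Prod.snd = (N : ℝ≥0∞)⁻¹ • ∑ i, Measure.dirac (zhat i) ∧
            ∫⁻ w, (‖w.1 - w.2‖₊ : ℝ≥0∞) ∂Pl ≤ ENNReal.ofReal ε),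
        ∫⁻ z, (‖f z‖₊ : ℝ≥0∞) ∂Q) with hSdef
    have construct : ∀ v : Z, ‖v‖₊ ≤ 1 → ∀ γ : ℝ, 0 < γ → γ ≤ 1 →
        C + ENNReal.ofReal ε * (‖f v‖₊ : ℝ≥0∞) ≤ S + ENNReal.ofReal (2 * γ) * C := by
      intro v hv γ hγ0 hγ1
      set s : ℝ := ε / γ with hsdef
      have hs : 0 ≤ s := div_nonneg hε hγ0.le
      set γ' : ℝ≥0∞ := ENNReal.ofReal γ with hγ'def
      have hγ'1 : γ' ≤ 1 := ENNReal.ofReal_le_one.mpr hγ1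
      have hone : (1 - γ') + γ' = 1 := tsub_add_cancel_of_le hγ'1
      have hγs : γ' * ENNReal.ofReal s = ENNReal.ofReal ε := by
        rw [← ENNReal.ofReal_mul hγ0.le, hsdef, mul_comm γ, div_mul_cancel₀ _ hγ0.ne']
      set w : Fin N → Z := fun i => zhat i + s • v with hwdef
      have hsv : ∀ i, (‖w i - zhat i‖₊ : ℝ≥0∞) = ENNReal.ofReal s * (‖v‖₊ : ℝ≥0∞) := by
        intro i
        rw [hwdef]
        simp only [add_sub_cancel_left]
        rw [nnnorm_smul, ENNReal.coe_mul, ← enorm_eq_nnnorm, Real.enorm_eq_ofReal hs]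
      -- the integral of any measurable function against such a combination
      have hint : ∀ {α : Type _} [MeasurableSpace α] (a b : Fin N → α) (g : α → ℝ≥0∞),
          Measurable g →
          ∫⁻ x, g x ∂((N : ℝ≥0∞)⁻¹ • ∑ i,
              ((1 - γ') • Measure.dirac (a i) + γ' • Measure.dirac (b i))) =
            (N : ℝ≥0∞)⁻¹ * ∑ i, ((1 - γ') * g (a i) + γ' * g (b i)) := by
        intro α _ a b g hg
        rw [lintegral_smul_measure, lintegral_finset_sum_measure]
        congr 1
        refine Finset.sum_congr rfl fun i _ => ?_
        rw [lintegral_add_measure, lintegral_smul_measure, lintegral_smul_measure,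
          lintegral_dirac' _ hg, lintegral_dirac' _ hg, smul_eq_mul, smul_eq_mul]
      have hprob : ∀ {α : Type _} [MeasurableSpace α] (a b : Fin N → α),
          IsProbabilityMeasure ((N : ℝ≥0∞)⁻¹ • ∑ i,
              ((1 - γ') • Measure.dirac (a i) + γ' • Measure.dirac (b i))) := by
        intro α _ a b
        constructor
        rw [← MeasureTheory.lintegral_one, hint a b _ measurable_const]
        simp only [mul_one, hone]
        rw [Finset.sum_const, Finset.card_univ, Fintype.card_fin, nsmul_eq_mul, mul_one, hNinv]
      set Pl : Measure (Z × Z) := (N : ℝ≥0∞)⁻¹ • ∑ i,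
          ((1 - γ') • Measure.dirac ((zhat i, zhat i) : Z × Z)
            + γ' • Measure.dirac ((w i, zhat i) : Z × Z)) with hPldef
      have hmap : ∀ (g : Z × Z → Z), Measurable g →
          Pl.map g = (N : ℝ≥0∞)⁻¹ • ∑ i,
            ((1 - γ') • Measure.dirac (g (zhat i, zhat i)) + γ' • Measure.dirac (g (w i, zhat i))) := by
        intro g hg
        rw [← Measure.mapₗ_apply_of_measurable hg, hPldef, _root_.map_smul, map_sum]
        congr 1
        refine Finset.sum_congr rfl fun i _ => ?_
        rw [LinearMap.map_add, LinearMap.map_smul, LinearMap.map_smul,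
          Measure.mapₗ_apply_of_measurable hg, Measure.mapₗ_apply_of_measurable hg,
          Measure.map_dirac' hg, Measure.map_dirac' hg]
      set Q : Measure Z := (N : ℝ≥0∞)⁻¹ • ∑ i,
          ((1 - γ') • Measure.dirac (zhat i) + γ' • Measure.dirac (w i)) with hQdef
      have hfst : Pl.map Prod.fst = Q := by rw [hmap Prod.fst measurable_fst]
      have hsnd : Pl.map Prod.snd = (N : ℝ≥0∞)⁻¹ • ∑ i, Measure.dirac (zhat i) := by
        rw [hmap Prod.snd measurable_snd]
        congr 1
        refine Finset.sum_congr rfl fun i _ => ?_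
        rw [← add_smul, hone, one_smul]
      have hcost : ∫⁻ x, (‖x.1 - x.2‖₊ : ℝ≥0∞) ∂Pl ≤ ENNReal.ofReal ε := by
        rw [hPldef, hint _ _ _ hm2]
        simp only [sub_self, nnnorm_zero, ENNReal.coe_zero, mul_zero, zero_add]
        calc (N : ℝ≥0∞)⁻¹ * ∑ i : Fin N, γ' * (‖w i - zhat i‖₊ : ℝ≥0∞)
            = (N : ℝ≥0∞)⁻¹ * ∑ i : Fin N, ENNReal.ofReal ε * (‖v‖₊ : ℝ≥0∞) := by
              congr 1
              refine Finset.sum_congr rfl fun i _ => ?_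
              rw [hsv i, ← mul_assoc, hγs]
          _ = ENNReal.ofReal ε * (‖v‖₊ : ℝ≥0∞) := by
              rw [Finset.sum_const, Finset.card_univ, Fintype.card_fin, nsmul_eq_mul,
                ← mul_assoc, hNinv, one_mul]
          _ ≤ ENNReal.ofReal ε * 1 := by gcongr; exact_mod_cast hv
          _ = ENNReal.ofReal ε := mul_one _
      have hVle : ∫⁻ z, (‖f z‖₊ : ℝ≥0∞) ∂Q ≤ S := by
        rw [hSdef]
        refine le_trans ?_ (le_iSup _ Q)
        exact le_iSup (fun _ => ∫⁻ z, (‖f z‖₊ : ℝ≥0∞) ∂Q)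
          ⟨hprob _ _, Pl, hprob _ _, hfst, hsnd, hcost⟩
      have hV : ∫⁻ z, (‖f z‖₊ : ℝ≥0∞) ∂Q =
          (N : ℝ≥0∞)⁻¹ * ∑ i, ((1 - γ') * (‖f (zhat i)‖₊ : ℝ≥0∞) + γ' * (‖f (w i)‖₊ : ℝ≥0∞)) :=
        hint _ _ _ hm
      -- per-sample estimate
      have hper : ∀ i : Fin N, (‖f (zhat i)‖₊ : ℝ≥0∞) + ENNReal.ofReal ε * (‖f v‖₊ : ℝ≥0∞) ≤
          ((1 - γ') * (‖f (zhat i)‖₊ : ℝ≥0∞) + γ' * (‖f (w i)‖₊ : ℝ≥0∞))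
            + ENNReal.ofReal (2 * γ) * (‖f (zhat i)‖₊ : ℝ≥0∞) := by
        intro i
        set a : ℝ≥0∞ := (‖f (zhat i)‖₊ : ℝ≥0∞)
        set b : ℝ≥0∞ := (‖f (w i)‖₊ : ℝ≥0∞)
        have h2γ : ENNReal.ofReal (2 * γ) = γ' + γ' := by
          rw [two_mul, ENNReal.ofReal_add hγ0.le hγ0.le]
        have hkey : ENNReal.ofReal ε * (‖f v‖₊ : ℝ≥0∞) ≤ γ' * (a + b) := by
          have h1 : (‖f (s • v)‖₊ : ℝ≥0∞) = ENNReal.ofReal s * (‖f v‖₊ : ℝ≥0∞) := by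
            rw [ContinuousLinearMap.map_smul, nnnorm_smul, ENNReal.coe_mul, ← enorm_eq_nnnorm, Real.enorm_eq_ofReal hs]
          have h2 : (‖f (s • v)‖₊ : ℝ≥0∞) ≤ a + b := by
            have : f (s • v) = f (w i) - f (zhat i) := by
              rw [hwdef]; simp only [map_add]; abel
            rw [this]
            calc (‖f (w i) - f (zhat i)‖₊ : ℝ≥0∞)
                ≤ (‖f (w i)‖₊ : ℝ≥0∞) + (‖f (zhat i)‖₊ : ℝ≥0∞) := by
                  exact_mod_cast nnnorm_sub_le _ _
              _ = a + b := add_comm _ _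
          calc ENNReal.ofReal ε * (‖f v‖₊ : ℝ≥0∞) = γ' * (‖f (s • v)‖₊ : ℝ≥0∞) := by
                rw [h1, ← mul_assoc, hγs]
            _ ≤ γ' * (a + b) := by gcongr
        calc a + ENNReal.ofReal ε * (‖f v‖₊ : ℝ≥0∞)
            ≤ a + γ' * (a + b) := by gcongr
          _ = ((1 - γ') + γ') * a + (γ' * a + γ' * b) := by rw [hone, one_mul, mul_add]
          _ = ((1 - γ') * a + γ' * b) + (γ' + γ') * a := by ring
          _ = ((1 - γ') * a + γ' * b) + ENNReal.ofReal (2 * γ) * a := by rw [h2γ]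
      -- sum up
      calc C + ENNReal.ofReal ε * (‖f v‖₊ : ℝ≥0∞)
          = (N : ℝ≥0∞)⁻¹ * ∑ i : Fin N,
              ((‖f (zhat i)‖₊ : ℝ≥0∞) + ENNReal.ofReal ε * (‖f v‖₊ : ℝ≥0∞)) := by
            rw [Finset.sum_add_distrib, mul_add, Finset.sum_const, Finset.card_univ,
              Fintype.card_fin, nsmul_eq_mul, ← mul_assoc, hNinv, one_mul, hCdef]
        _ ≤ (N : ℝ≥0∞)⁻¹ * ∑ i : Fin N,
              (((1 - γ') * (‖f (zhat i)‖₊ : ℝ≥0∞) + γ' * (‖f (w i)‖₊ : ℝ≥0∞))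
                + ENNReal.ofReal (2 * γ) * (‖f (zhat i)‖₊ : ℝ≥0∞)) := by
            exact mul_le_mul_right (Finset.sum_le_sum fun i _ => hper i) _
        _ = ∫⁻ z, (‖f z‖₊ : ℝ≥0∞) ∂Q + ENNReal.ofReal (2 * γ) * C := by
            rw [hV, Finset.sum_add_distrib, mul_add, hCdef, ← Finset.mul_sum, ← mul_assoc,
              mul_comm ((N : ℝ≥0∞)⁻¹) (ENNReal.ofReal (2 * γ)), mul_assoc]
        _ ≤ S + ENNReal.ofReal (2 * γ) * C := by gcongr
    -- now the epsilon argument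
    refine ENNReal.le_of_forall_pos_le_add fun δ hδ hS => ?_
    obtain ⟨γ, hγ0, hγ1, hγsmall⟩ : ∃ γ : ℝ, 0 < γ ∧ γ ≤ 1 ∧
        ENNReal.ofReal (2 * γ) * C ≤ (δ : ℝ≥0∞) / 2 := by
      by_cases hC : C = 0
      · exact ⟨1, one_pos, le_refl 1, by simp [hC]⟩
      · have hd2 : (δ : ℝ≥0∞) / 2 / C ≠ 0 := by
          refine ENNReal.div_ne_zero.mpr ⟨?_, hCt⟩
          exact ENNReal.div_ne_zero.mpr ⟨by exact_mod_cast hδ.ne', ENNReal.ofNat_ne_top⟩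
        have hd2t : (δ : ℝ≥0∞) / 2 / C ≠ ∞ := by
          exact (ENNReal.div_lt_top ((ENNReal.div_lt_top ENNReal.coe_lt_top.ne two_ne_zero).ne) hC).ne
        set x : ℝ := ((δ : ℝ≥0∞) / 2 / C).toReal with hxdef
        have hx0 : 0 < x := ENNReal.toReal_pos hd2 hd2t
        refine ⟨min 1 (x / 2), lt_min one_pos (by positivity), min_le_left _ _, ?_⟩
        have h1 : ENNReal.ofReal (2 * min 1 (x / 2)) ≤ (δ : ℝ≥0∞) / 2 / C := by
          calc ENNReal.ofReal (2 * min 1 (x / 2)) ≤ ENNReal.ofReal (2 * (x / 2)) := by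
                gcongr
                exact min_le_right _ _
            _ = ENNReal.ofReal x := by congr 1; ring
            _ = (δ : ℝ≥0∞) / 2 / C := by rw [hxdef, ENNReal.ofReal_toReal hd2t]
        calc ENNReal.ofReal (2 * min 1 (x / 2)) * C ≤ ((δ : ℝ≥0∞) / 2 / C) * C := by gcongr
          _ = (δ : ℝ≥0∞) / 2 := ENNReal.div_mul_cancel hC hCt
    obtain ⟨v, hv1, hvf⟩ : ∃ v : Z, ‖v‖₊ ≤ 1 ∧
        ENNReal.ofReal ε * (‖f‖₊ : ℝ≥0∞) ≤ ENNReal.ofReal ε * (‖f v‖₊ : ℝ≥0∞) + (δ : ℝ≥0∞) / 2 := by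
      by_cases h0 : ENNReal.ofReal ε * (‖f‖₊ : ℝ≥0∞) ≤ (δ : ℝ≥0∞) / 2
      · refine ⟨0, by simp, ?_⟩
        simpa using h0
      · push_neg at h0
        set e : ℝ≥0 := ε.toNNReal with hedef
        have hecoe : ENNReal.ofReal ε = (e : ℝ≥0∞) := rfl
        have he0 : e ≠ 0 := by
          intro h
          rw [hecoe, h] at h0
          simp at h0
        set d : ℝ≥0 := δ / 2 with hddef
        have hd0 : 0 < d := by positivity
        have hdcoe : ((d : ℝ≥0) : ℝ≥0∞) = (δ : ℝ≥0∞) / 2 := by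
          rw [hddef, ENNReal.coe_div two_ne_zero]; norm_num
        have hf0 : ‖f‖₊ ≠ 0 := by
          intro h
          rw [h] at h0
          simp at h0
        set m : ℝ≥0 := min ‖f‖₊ (d / e) with hmdef
        have hm0 : 0 < m := lt_min (pos_iff_ne_zero.mpr hf0) (by positivity)
        have hmle : m ≤ ‖f‖₊ := min_le_left _ _
        set c : ℝ≥0 := ‖f‖₊ - m with hcdef
        have hcf : c < ‖f‖₊ := tsub_lt_self (pos_iff_ne_zero.mpr hf0) hm0
        obtain ⟨v, hv1, hvc⟩ := f.exists_lt_apply_of_lt_opNNNorm hcf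
        refine ⟨v, hv1.le, ?_⟩
        have hefle : e * ‖f‖₊ ≤ e * ‖f v‖₊ + d := by
          calc e * ‖f‖₊ = e * (c + m) := by rw [hcdef, tsub_add_cancel_of_le hmle]
            _ = e * c + e * m := mul_add _ _ _
            _ ≤ e * ‖f v‖₊ + e * (d / e) := by
                exact add_le_add (mul_le_mul_right hvc.le e) (mul_le_mul_right (min_le_right _ _) e)
            _ = e * ‖f v‖₊ + d := by rw [mul_div_cancel₀ _ he0]
        calc ENNReal.ofReal ε * (‖f‖₊ : ℝ≥0∞) = ((e * ‖f‖₊ : ℝ≥0) : ℝ≥0∞) := by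
              rw [hecoe, ENNReal.coe_mul]
          _ ≤ ((e * ‖f v‖₊ + d : ℝ≥0) : ℝ≥0∞) := by exact_mod_cast hefle
          _ = ENNReal.ofReal ε * (‖f v‖₊ : ℝ≥0∞) + (δ : ℝ≥0∞) / 2 := by
              rw [ENNReal.coe_add, ENNReal.coe_mul, hecoe, hdcoe]
    calc C + ENNReal.ofReal ε * (‖f‖₊ : ℝ≥0∞)
        ≤ (C + ENNReal.ofReal ε * (‖f v‖₊ : ℝ≥0∞)) + (δ : ℝ≥0∞) / 2 := by
          rw [add_assoc]; gcongr
      _ ≤ (S + ENNReal.ofReal (2 * γ) * C) + (δ : ℝ≥0∞) / 2 := by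
          exact add_le_add_left (construct v hv1 γ hγ0 hγ1) _
      _ ≤ (S + (δ : ℝ≥0∞) / 2) + (δ : ℝ≥0∞) / 2 := by gcongr
      _ = S + (δ : ℝ≥0∞) := by rw [add_assoc, ENNReal.add_halves]


theorem stmt1
    (p K N : ℕ) (hp : 1 ≤ p) (hK : 1 ≤ K) (hN : 1 ≤ N)
    (r : ℝ≥0∞) [Fact (1 ≤ r)] (hr' : r ≠ ∞)
    (ε : ℝ) (hε : 0 ≤ ε)
    -- `T B` is the continuous linear map `T_B (x, θ) = θ - Bᵀ x` on
    -- `Z = ℝ^p × ℝ^K` equipped with the `ℓ_r` norm, mapping into `ℝ^K` with the `ℓ_r` norm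
    (T : Matrix (Fin p) (Fin K) ℝ →
        (WithLp r ((PiLp r fun _ : Fin p => ℝ) × (PiLp r fun _ : Fin K => ℝ)) →L[ℝ]
         (PiLp r fun _ : Fin K => ℝ)))
    (hT : ∀ B z, (WithLp.equiv r _) (T B z) =
        (WithLp.equiv r _) ((WithLp.equiv r _ z).2) -
          Matrix.mulVec B.transpose ((WithLp.equiv r _) ((WithLp.equiv r _ z).1)))
    -- training samples
    (zhat : Fin N → WithLp r ((PiLp r fun _ : Fin p => ℝ) × (PiLp r fun _ : Fin K => ℝ))) :
    (⨅ B : Matrix (Fin p) (Fin K) ℝ,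
      ⨆ (Q : Measure (WithLp r ((PiLp r fun _ : Fin p => ℝ) × (PiLp r fun _ : Fin K => ℝ))))
        (_ : IsProbabilityMeasure Q ∧
          ∃ Pl : Measure ((WithLp r ((PiLp r fun _ : Fin p => ℝ) × (PiLp r fun _ : Fin K => ℝ))) ×
              (WithLp r ((PiLp r fun _ : Fin p => ℝ) × (PiLp r fun _ : Fin K => ℝ)))),
            IsProbabilityMeasure Pl ∧
            Pl.map Prod.fst = Q ∧
            Pl.map Prod.snd = (N : ℝ≥0∞)⁻¹ • ∑ i, Measure.dirac (zhat i) ∧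
            ∫⁻ w, (‖w.1 - w.2‖₊ : ℝ≥0∞) ∂Pl ≤ ENNReal.ofReal ε),
        ∫⁻ z, (‖T B z‖₊ : ℝ≥0∞) ∂Q)
    = ⨅ B : Matrix (Fin p) (Fin K) ℝ,
        ((N : ℝ≥0∞)⁻¹ * ∑ i, (‖T B (zhat i)‖₊ : ℝ≥0∞) + ENNReal.ofReal ε * (‖T B‖₊ : ℝ≥0∞)) := by
  haveI : BorelSpace (PiLp r fun _ : Fin p => ℝ) := PiLp.borelSpace r
  haveI : BorelSpace (PiLp r fun _ : Fin K => ℝ) := PiLp.borelSpace r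
  haveI : BorelSpace
      (WithLp r ((PiLp r fun _ : Fin p => ℝ) × (PiLp r fun _ : Fin K => ℝ))) :=
    WithLp.borelSpace r _ _
  haveI : SecondCountableTopology
      (WithLp r ((PiLp r fun _ : Fin p => ℝ) × (PiLp r fun _ : Fin K => ℝ))) :=
    inferInstance
  exact iInf_congr fun B => key (T B) hN zhat ε hε
end

section
/- Fix B ∈ ℝ^{p×K}, ε ≥ 0, and δ > 0. Then there exist a probability measure Q on Z and a probability measure Π on Z × Z whose first and second marginals are Q and P̂_N respectively, such that ∫ ‖z − w‖_r dΠ(z, w) ≤ ε and ∫ ‖T_B z‖_r dQ(z) ≥ (1/N) ∑_{i=1}^N ‖T_B ẑ_i‖_r + ε · ‖T_B‖ − δ (lower-bound direction of the worst-case expectation identity in Theorem 1). -/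
set_option maxHeartbeats 1000000
set_option synthInstance.maxHeartbeats 400000


open MeasureTheory ENNReal

instance WithLp.instMeasurableSingletonClass' (r : ℝ≥0∞) (α : Type*) [MeasurableSpace α]
    [MeasurableSingletonClass α] : MeasurableSingletonClass (WithLp r α) :=
  ⟨fun x => MeasurableSpace.measurableSet_comap.2
    ⟨{WithLp.ofLp x}, measurableSet_singleton _, by
      ext y; simp only [Set.mem_preimage, Set.mem_singleton_iff]
      exact ⟨fun h => congrArg (WithLp.toLp r) h, fun h => h ▸ rfl⟩⟩⟩

lemma map_finset_sum_dirac {α β ι : Type*} [MeasurableSpace α] [MeasurableSpace β]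
    {f : α → β} (hf : Measurable f) (s : Finset ι) (g : ι → α) :
    (∑ i ∈ s, Measure.dirac (g i)).map f = ∑ i ∈ s, Measure.dirac (f (g i)) := by
  classical
  induction s using Finset.induction with
  | empty => simp [Measure.map_zero]
  | insert _ _ h ih =>
      rw [Finset.sum_insert h, Finset.sum_insert h, Measure.map_add _ _ hf,
        Measure.map_dirac' hf, ih]

lemma avg_dirac_prob {γ : Type*} [MeasurableSpace γ] {N : ℕ} (hNne : (N : ℝ≥0∞) ≠ 0)
    (g : Fin N → γ) :
    IsProbabilityMeasure ((N : ℝ≥0∞)⁻¹ • ∑ i, Measure.dirac (g i)) := by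
  constructor
  have h1 : (∑ i, Measure.dirac (g i) : Measure γ) Set.univ = N := by
    rw [Measure.finset_sum_apply]
    simp
  rw [Measure.smul_apply, h1, smul_eq_mul,
    ENNReal.inv_mul_cancel hNne (ENNReal.natCast_ne_top N)]

lemma mix_prob {γ : Type*} [MeasurableSpace γ] {μ ν : Measure γ} {l : ℝ≥0∞} (hl : l ≤ 1)
    (hμ : IsProbabilityMeasure μ) (hν : IsProbabilityMeasure ν) :
    IsProbabilityMeasure ((1 - l) • μ + l • ν) := by
  constructor
  rw [Measure.add_apply, Measure.smul_apply, Measure.smul_apply, measure_univ, measure_univ,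
    smul_eq_mul, smul_eq_mul, mul_one, mul_one, tsub_add_cancel_of_le hl]

lemma mix_map {γ β : Type*} [MeasurableSpace γ] [MeasurableSpace β] (μ ν : Measure γ)
    (a b : ℝ≥0∞) {f : γ → β} (hf : Measurable f) :
    (a • μ + b • ν).map f = a • μ.map f + b • ν.map f := by
  rw [Measure.map_add _ _ hf, Measure.map_smul, Measure.map_smul]

lemma avg_dirac_map {γ β : Type*} [MeasurableSpace γ] [MeasurableSpace β] {N : ℕ}
    (g : Fin N → γ) {f : γ → β} (hf : Measurable f) :
    (((N : ℝ≥0∞)⁻¹ • ∑ i, Measure.dirac (g i)).map f)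
      = (N : ℝ≥0∞)⁻¹ • ∑ i, Measure.dirac (f (g i)) := by
  rw [Measure.map_smul, map_finset_sum_dirac hf]

lemma mix_lintegral {γ : Type*} [MeasurableSpace γ] (μ ν : Measure γ) (a b : ℝ≥0∞)
    (f : γ → ℝ≥0∞) :
    ∫⁻ z, f z ∂(a • μ + b • ν) = a * ∫⁻ z, f z ∂μ + b * ∫⁻ z, f z ∂ν := by
  rw [lintegral_add_measure, lintegral_smul_measure, lintegral_smul_measure, smul_eq_mul, smul_eq_mul]

lemma avg_dirac_lintegral {γ : Type*} [MeasurableSpace γ] [MeasurableSingletonClass γ] {N : ℕ}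
    (g : Fin N → γ) (f : γ → ℝ≥0∞) :
    ∫⁻ z, f z ∂((N : ℝ≥0∞)⁻¹ • ∑ i, Measure.dirac (g i))
      = (N : ℝ≥0∞)⁻¹ * ∑ i, f (g i) := by
  rw [lintegral_smul_measure, lintegral_finset_sum_measure]
  simp [lintegral_dirac]

instance instMSCZ (p K : ℕ) (r : ℝ≥0∞) :
    MeasurableSingletonClass
      (WithLp r ((PiLp r fun _ : Fin p => ℝ) × (PiLp r fun _ : Fin K => ℝ))) :=
  inferInstance

theorem stmt3
    (p K N : ℕ) (hp : 1 ≤ p) (hK : 1 ≤ K) (hN : 1 ≤ N)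
    (r : ℝ≥0∞) [Fact (1 ≤ r)] (hr' : r ≠ ∞)
    (B : Matrix (Fin p) (Fin K) ℝ)
    (ε δ : ℝ) (hε : 0 ≤ ε) (hδ : 0 < δ)
    -- `T` is the continuous linear map `T_B (x, θ) = θ - Bᵀ x` on
    -- `Z = ℝ^p × ℝ^K` equipped with the `ℓ_r` norm, mapping into `ℝ^K` with the `ℓ_r` norm
    (T : WithLp r ((PiLp r fun _ : Fin p => ℝ) × (PiLp r fun _ : Fin K => ℝ)) →L[ℝ]
         (PiLp r fun _ : Fin K => ℝ))
    (hT : ∀ z, (WithLp.equiv r _) (T z) =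
        (WithLp.equiv r _) ((WithLp.equiv r _ z).2) -
          Matrix.mulVec B.transpose ((WithLp.equiv r _) ((WithLp.equiv r _ z).1)))
    -- training samples
    (zhat : Fin N → WithLp r ((PiLp r fun _ : Fin p => ℝ) × (PiLp r fun _ : Fin K => ℝ))) :
    ∃ Q : Measure (WithLp r ((PiLp r fun _ : Fin p => ℝ) × (PiLp r fun _ : Fin K => ℝ))),
      ∃ Pl : Measure ((WithLp r ((PiLp r fun _ : Fin p => ℝ) × (PiLp r fun _ : Fin K => ℝ))) ×
          (WithLp r ((PiLp r fun _ : Fin p => ℝ) × (PiLp r fun _ : Fin K => ℝ)))),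
        IsProbabilityMeasure Q ∧ IsProbabilityMeasure Pl ∧
        Pl.map Prod.fst = Q ∧
        Pl.map Prod.snd = (N : ℝ≥0∞)⁻¹ • ∑ i, Measure.dirac (zhat i) ∧
        ∫⁻ w, (‖w.1 - w.2‖₊ : ℝ≥0∞) ∂Pl ≤ ENNReal.ofReal ε ∧
        (N : ℝ≥0∞)⁻¹ * ∑ i, (‖T (zhat i)‖₊ : ℝ≥0∞) + ENNReal.ofReal ε * (‖T‖₊ : ℝ≥0∞)
          - ENNReal.ofReal δ
          ≤ ∫⁻ z, (‖T z‖₊ : ℝ≥0∞) ∂Q := by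
  classical
  have hNpos : (0:ℝ) < N := by exact_mod_cast hN
  have hN0 : (N:ℝ) ≠ 0 := ne_of_gt hNpos
  have hNne : (N : ℝ≥0∞) ≠ 0 := Nat.cast_ne_zero.2 (by omega)
  -- real quantities
  have hS0' : (0:ℝ) ≤ (N : ℝ)⁻¹ * ∑ i, ‖T (zhat i)‖ :=
    mul_nonneg (inv_nonneg.2 hNpos.le) (Finset.sum_nonneg fun i _ => norm_nonneg _)
  obtain ⟨S, hS0, hSdef⟩ : ∃ S : ℝ, 0 ≤ S ∧ S = (N : ℝ)⁻¹ * ∑ i, ‖T (zhat i)‖ :=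
    ⟨_, hS0', rfl⟩
  have hηpos : (0:ℝ) < δ / (2 * (ε + 1)) := by positivity
  obtain ⟨u, hu1, hu2⟩ := T.exists_lt_apply_of_lt_opNorm
    (r := ‖T‖ - δ / (2 * (ε + 1))) (by linarith)
  obtain ⟨lam, hlam0, hlam1, hlam2⟩ :
      ∃ lam : ℝ, 0 < lam ∧ lam ≤ 1 ∧ lam * (4 * S + 2) ≤ δ := by
    refine ⟨min 1 (δ / (4 * S + 2)), lt_min one_pos (div_pos hδ (by linarith)),
      min_le_left _ _, ?_⟩
    calc min 1 (δ / (4 * S + 2)) * (4 * S + 2) ≤ (δ / (4 * S + 2)) * (4 * S + 2) :=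
          mul_le_mul_of_nonneg_right (min_le_right _ _) (by linarith)
      _ = δ := div_mul_cancel₀ _ (by linarith)
  obtain ⟨c, hc0, hlc⟩ : ∃ c : ℝ, 0 ≤ c ∧ lam * c = ε :=
    ⟨ε / lam, div_nonneg hε hlam0.le, by rw [mul_comm, div_mul_cancel₀ ε hlam0.ne']⟩
  obtain ⟨l, hl⟩ : ∃ l : ℝ≥0∞, l = ENNReal.ofReal lam := ⟨_, rfl⟩
  have hl1 : l ≤ 1 := by
    rw [hl]; exact ENNReal.ofReal_le_one.2 hlam1
  -- the probability measures
  refine ⟨(1 - l) • ((N : ℝ≥0∞)⁻¹ • ∑ i, Measure.dirac (zhat i))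
      + l • ((N : ℝ≥0∞)⁻¹ • ∑ i, Measure.dirac (zhat i + c • u)),
    (1 - l) • ((N : ℝ≥0∞)⁻¹ • ∑ i, Measure.dirac ((zhat i, zhat i)))
      + l • ((N : ℝ≥0∞)⁻¹ • ∑ i, Measure.dirac ((zhat i + c • u, zhat i))),
    mix_prob hl1 (avg_dirac_prob hNne _) (avg_dirac_prob hNne _),
    mix_prob hl1 (avg_dirac_prob hNne _) (avg_dirac_prob hNne _), ?_, ?_, ?_, ?_⟩
  · -- first marginal
    rw [mix_map _ _ _ _ measurable_fst, avg_dirac_map _ measurable_fst,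
      avg_dirac_map _ measurable_fst]
  · -- second marginal
    rw [mix_map _ _ _ _ measurable_snd, avg_dirac_map _ measurable_snd,
      avg_dirac_map _ measurable_snd, ← add_smul, tsub_add_cancel_of_le hl1, one_smul]
  · -- transport cost
    rw [mix_lintegral, avg_dirac_lintegral, avg_dirac_lintegral]
    have h2 : ∀ i : Fin N,
        ((‖(zhat i + c • u) - zhat i‖₊ : ℝ≥0∞)) = ENNReal.ofReal (c * ‖u‖) := by
      intro i
      have hcc : (zhat i + c • u) - zhat i = c • u := by abel
      rw [hcc, ← enorm_eq_nnnorm, ← ofReal_norm, norm_smul, Real.norm_eq_abs, abs_of_nonneg hc0]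
    simp only [sub_self, nnnorm_zero, ENNReal.coe_zero, Finset.sum_const_zero, mul_zero,
      zero_add, h2, Finset.sum_const, Finset.card_univ, Fintype.card_fin, nsmul_eq_mul]
    have h3 : (N : ℝ≥0∞)⁻¹ * ((N : ℝ≥0∞) * ENNReal.ofReal (c * ‖u‖))
        = ENNReal.ofReal (c * ‖u‖) := by
      rw [← mul_assoc, ENNReal.inv_mul_cancel hNne (ENNReal.natCast_ne_top N), one_mul]
    rw [h3, hl, ← ENNReal.ofReal_mul hlam0.le]
    apply ENNReal.ofReal_le_ofReal
    have h5 : lam * (c * ‖u‖) = ε * ‖u‖ := by rw [← mul_assoc, hlc]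
    rw [h5]
    nlinarith [norm_nonneg u, hu1, hε]
  · -- the expectation lower bound
    have hS'0' : (0:ℝ) ≤ (N : ℝ)⁻¹ * ∑ i, ‖T (zhat i + c • u)‖ :=
      mul_nonneg (inv_nonneg.2 hNpos.le) (Finset.sum_nonneg fun i _ => norm_nonneg _)
    obtain ⟨S', hS'0, hS'def⟩ :
        ∃ S' : ℝ, 0 ≤ S' ∧ S' = (N : ℝ)⁻¹ * ∑ i, ‖T (zhat i + c • u)‖ := ⟨_, hS'0', rfl⟩
    have hterm : ∀ i : Fin N, c * ‖T u‖ - ‖T (zhat i)‖ ≤ ‖T (zhat i + c • u)‖ := by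
      intro i
      have he : T (zhat i + c • u) = T (zhat i) + c • T u := by
        rw [map_add, T.map_smul]
      have h2 : ‖c • T u‖ ≤ ‖T (zhat i) + c • T u‖ + ‖T (zhat i)‖ := by
        calc ‖c • T u‖ = ‖(T (zhat i) + c • T u) - T (zhat i)‖ := by rw [add_sub_cancel_left]
          _ ≤ _ := norm_sub_le _ _
      have h3 : ‖c • T u‖ = c * ‖T u‖ := by
        rw [norm_smul, Real.norm_eq_abs, abs_of_nonneg hc0]
      rw [he]; linarith
    have hS'ge : c * ‖T u‖ - S ≤ S' := by
      have hsum' : ∑ i, (c * ‖T u‖ - ‖T (zhat i)‖) ≤ ∑ i, ‖T (zhat i + c • u)‖ :=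
        Finset.sum_le_sum fun i _ => hterm i
      rw [Finset.sum_sub_distrib, Finset.sum_const, Finset.card_univ, Fintype.card_fin,
        nsmul_eq_mul] at hsum'
      have h3 := mul_le_mul_of_nonneg_left hsum' (by positivity : (0:ℝ) ≤ (N:ℝ)⁻¹)
      have h4 : (N:ℝ)⁻¹ * ((N:ℝ) * (c * ‖T u‖) - ∑ i, ‖T (zhat i)‖)
          = c * ‖T u‖ - (N : ℝ)⁻¹ * ∑ i, ‖T (zhat i)‖ := by
        field_simp
      rw [h4] at h3
      rw [hSdef, hS'def]
      exact h3
    have hTu : ε * ‖T‖ - δ / 2 ≤ ε * ‖T u‖ := by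
      have hd : (δ / (2 * (ε + 1))) * (2 * (ε + 1)) = δ := div_mul_cancel₀ _ (by positivity)
      nlinarith [mul_le_mul_of_nonneg_left hu2.le hε, hηpos, hε]
    have key : S + ε * ‖T‖ ≤ (1 - lam) * S + lam * S' + δ := by
      have h5 : lam * (c * ‖T u‖ - S) ≤ lam * S' := mul_le_mul_of_nonneg_left hS'ge hlam0.le
      have h6 : lam * (c * ‖T u‖) = ε * ‖T u‖ := by rw [← mul_assoc, hlc]
      nlinarith [h5, h6, hTu, hlam2, hlam0.le, hS0]
    -- helper to turn averaged sums into `ofReal`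
    have hsumOf : ∀ (g : Fin N → ℝ), (∀ i, 0 ≤ g i) →
        (N : ℝ≥0∞)⁻¹ * ∑ i, ENNReal.ofReal (g i)
          = ENNReal.ofReal ((N : ℝ)⁻¹ * ∑ i, g i) := by
      intro g hg
      rw [ENNReal.ofReal_mul (by positivity), ENNReal.ofReal_inv_of_pos hNpos,
        ENNReal.ofReal_natCast, ENNReal.ofReal_sum_of_nonneg (fun i _ => hg i)]
    have hA : (N : ℝ≥0∞)⁻¹ * ∑ i, (‖T (zhat i)‖₊ : ℝ≥0∞) = ENNReal.ofReal S := by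
      rw [hSdef, ← hsumOf (fun i => ‖T (zhat i)‖) (fun i => norm_nonneg _)]
      refine congrArg _ (Finset.sum_congr rfl fun i _ => ?_)
      exact (ofReal_norm _).symm
    have hA' : (N : ℝ≥0∞)⁻¹ * ∑ i, (‖T (zhat i + c • u)‖₊ : ℝ≥0∞) = ENNReal.ofReal S' := by
      rw [hS'def, ← hsumOf (fun i => ‖T (zhat i + c • u)‖) (fun i => norm_nonneg _)]
      refine congrArg _ (Finset.sum_congr rfl fun i _ => ?_)
      exact (ofReal_norm _).symm
    rw [mix_lintegral, avg_dirac_lintegral, avg_dirac_lintegral]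
    simp only [hA, hA']
    have h1l : (1 - l) = ENNReal.ofReal (1 - lam) := by
      rw [hl, ← ENNReal.ofReal_one, ← ENNReal.ofReal_sub _ hlam0.le]
    rw [h1l, hl, ← ENNReal.ofReal_mul (by linarith), ← ENNReal.ofReal_mul hlam0.le,
      ← ENNReal.ofReal_add (mul_nonneg (by linarith) hS0) (mul_nonneg hlam0.le hS'0)]
    have hE : ENNReal.ofReal ε * ((‖T‖₊ : ℝ≥0∞)) = ENNReal.ofReal (ε * ‖T‖) := by
      rw [← enorm_eq_nnnorm, ← ofReal_norm, ← ENNReal.ofReal_mul hε]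
    rw [hE, ← ENNReal.ofReal_add hS0 (mul_nonneg hε (norm_nonneg _))]
    rw [tsub_le_iff_right,
      ← ENNReal.ofReal_add
        (add_nonneg (mul_nonneg (by linarith) hS0) (mul_nonneg hlam0.le hS'0)) hδ.le]
    exact ENNReal.ofReal_le_ofReal key
end

section
/- Let E and F be real normed vector spaces, A : E → F a continuous linear map, ẑ_1, …, ẑ_N ∈ E with N ≥ 1, and ε > 0. Then the dual objective of the inner Wasserstein maximization satisfies inf_{λ ≥ 0} [ λ·ε + (1/N) ∑_{i=1}^N sup_{z ∈ E} ( ‖A z‖ − λ ‖z − ẑ_i‖ ) ] = ε·‖A‖ + (1/N) ∑_{i=1}^N ‖A ẑ_i‖, where for each λ the inner supremum is taken in the extended reals (it equals +∞ when λ < ‖A‖ and ‖A ẑ_i‖ when λ ≥ ‖A‖), and the infimum over λ is attained at λ = ‖A‖. -/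
open ENNReal

lemma aux_sup_eq
    {E F : Type*} [NormedAddCommGroup E] [NormedSpace ℝ E]
    [NormedAddCommGroup F] [NormedSpace ℝ F]
    (A : E →L[ℝ] F) (lam : ℝ) (hlam : ‖A‖ ≤ lam) (w : E) :
    (⨆ z : E, ENNReal.ofReal (‖A z‖ - lam * ‖z - w‖)) = ENNReal.ofReal ‖A w‖ := by
  apply le_antisymm
  · refine iSup_le fun z => ENNReal.ofReal_le_ofReal ?_
    have h1 : ‖A z‖ ≤ ‖A w‖ + ‖A (z - w)‖ := by
      have := norm_add_le (A w) (A (z - w))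
      simpa [map_sub] using this
    have h2 : ‖A (z - w)‖ ≤ lam * ‖z - w‖ :=
      (A.le_opNorm _).trans (by gcongr)
    linarith
  · have := le_iSup (fun z : E => ENNReal.ofReal (‖A z‖ - lam * ‖z - w‖)) w
    simpa using this

lemma aux_sup_top
    {E F : Type*} [NormedAddCommGroup E] [NormedSpace ℝ E]
    [NormedAddCommGroup F] [NormedSpace ℝ F]
    (A : E →L[ℝ] F) (lam : ℝ) (hlam0 : 0 ≤ lam) (hlam : lam < ‖A‖) (w : E) :
    (⨆ z : E, ENNReal.ofReal (‖A z‖ - lam * ‖z - w‖)) = ⊤ := by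
  have h : ¬ ∀ x, ‖A x‖ ≤ lam * ‖x‖ := by
    intro h
    exact absurd (A.opNorm_le_bound hlam0 h) (not_le.mpr hlam)
  push_neg at h
  obtain ⟨u, hu⟩ := h
  set c : ℝ := ‖A u‖ - lam * ‖u‖ with hc
  have hcpos : 0 < c := by simp [hc]; linarith
  rw [iSup_eq_top]
  intro b hb
  set t : ℝ := (b.toReal + ‖A w‖ + 1) / c with ht
  have htpos : 0 < t := by positivity
  refine ⟨w + t • u, ?_⟩
  have key : b.toReal < ‖A (w + t • u)‖ - lam * ‖(w + t • u) - w‖ := by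
    have h1 : ‖A (w + t • u)‖ ≥ t * ‖A u‖ - ‖A w‖ := by
      have : ‖A (t • u)‖ ≤ ‖A w‖ + ‖A (w + t • u)‖ := by
        calc ‖A (t • u)‖ = ‖A (w + t • u) - A w‖ := by
              rw [← map_sub, add_sub_cancel_left]
          _ ≤ ‖A w‖ + ‖A (w + t • u)‖ := by
              have := norm_sub_le (A (w + t • u)) (A w); linarith
      have hnt : ‖A (t • u)‖ = t * ‖A u‖ := by
        rw [map_smul, norm_smul, Real.norm_eq_abs, abs_of_pos htpos]
      linarith
    have h2 : ‖(w + t • u) - w‖ = t * ‖u‖ := by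
      simp [norm_smul, abs_of_pos htpos]
    have h3 : t * c = b.toReal + ‖A w‖ + 1 := by
      rw [ht, div_mul_cancel₀ _ hcpos.ne']
    rw [h2]
    have : t * ‖A u‖ - ‖A w‖ - lam * (t * ‖u‖) = t * c - ‖A w‖ := by ring
    nlinarith
  calc b = ENNReal.ofReal b.toReal := (ENNReal.ofReal_toReal hb.ne).symm
    _ < ENNReal.ofReal (‖A (w + t • u)‖ - lam * ‖(w + t • u) - w‖) := by
        rw [ENNReal.ofReal_lt_ofReal_iff]
        · exact key
        · have := ENNReal.toReal_nonneg (a := b); linarith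

theorem stmt6
    {E F : Type*} [NormedAddCommGroup E] [NormedSpace ℝ E]
    [NormedAddCommGroup F] [NormedSpace ℝ F]
    (A : E →L[ℝ] F) (N : ℕ) (hN : 1 ≤ N) (zhat : Fin N → E)
    (ε : ℝ) (hε : 0 < ε) :
    (⨅ (lam : ℝ) (_ : 0 ≤ lam),
        ENNReal.ofReal lam * ENNReal.ofReal ε +
          (N : ℝ≥0∞)⁻¹ * ∑ i, ⨆ z : E, ENNReal.ofReal (‖A z‖ - lam * ‖z - zhat i‖))
      = ENNReal.ofReal ε * (‖A‖₊ : ℝ≥0∞) + (N : ℝ≥0∞)⁻¹ * ∑ i, (‖A (zhat i)‖₊ : ℝ≥0∞)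
    ∧ ENNReal.ofReal ‖A‖ * ENNReal.ofReal ε +
          (N : ℝ≥0∞)⁻¹ * ∑ i, ⨆ z : E, ENNReal.ofReal (‖A z‖ - ‖A‖ * ‖z - zhat i‖)
      = ENNReal.ofReal ε * (‖A‖₊ : ℝ≥0∞) + (N : ℝ≥0∞)⁻¹ * ∑ i, (‖A (zhat i)‖₊ : ℝ≥0∞) := by
  have hA : ENNReal.ofReal ‖A‖ = (‖A‖₊ : ℝ≥0∞) := ofReal_norm A
  have hAi : ∀ i, ENNReal.ofReal ‖A (zhat i)‖ = (‖A (zhat i)‖₊ : ℝ≥0∞) :=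
    fun i => ofReal_norm _
  have hsecond : ENNReal.ofReal ‖A‖ * ENNReal.ofReal ε +
          (N : ℝ≥0∞)⁻¹ * ∑ i, ⨆ z : E, ENNReal.ofReal (‖A z‖ - ‖A‖ * ‖z - zhat i‖)
      = ENNReal.ofReal ε * (‖A‖₊ : ℝ≥0∞) + (N : ℝ≥0∞)⁻¹ * ∑ i, (‖A (zhat i)‖₊ : ℝ≥0∞) := by
    rw [hA, mul_comm]
    congr 2
    refine Finset.sum_congr rfl fun i _ => ?_
    rw [aux_sup_eq A ‖A‖ le_rfl (zhat i), hAi i]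
  refine ⟨le_antisymm ?_ ?_, hsecond⟩
  · calc (⨅ (lam : ℝ) (_ : 0 ≤ lam),
        ENNReal.ofReal lam * ENNReal.ofReal ε +
          (N : ℝ≥0∞)⁻¹ * ∑ i, ⨆ z : E, ENNReal.ofReal (‖A z‖ - lam * ‖z - zhat i‖))
        ≤ ENNReal.ofReal ‖A‖ * ENNReal.ofReal ε +
          (N : ℝ≥0∞)⁻¹ * ∑ i, ⨆ z : E, ENNReal.ofReal (‖A z‖ - ‖A‖ * ‖z - zhat i‖) :=
          iInf₂_le ‖A‖ (norm_nonneg A)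
      _ = _ := hsecond
  · refine le_iInf₂ fun lam hlam => ?_
    rcases le_or_gt ‖A‖ lam with h | h
    · have : (N : ℝ≥0∞)⁻¹ * ∑ i, ⨆ z : E, ENNReal.ofReal (‖A z‖ - lam * ‖z - zhat i‖)
          = (N : ℝ≥0∞)⁻¹ * ∑ i, (‖A (zhat i)‖₊ : ℝ≥0∞) := by
        congr 1
        exact Finset.sum_congr rfl fun i _ => by rw [aux_sup_eq A lam h (zhat i), hAi i]
      rw [this]
      refine add_le_add ?_ le_rfl
      calc ENNReal.ofReal ε * (‖A‖₊ : ℝ≥0∞) = ENNReal.ofReal ‖A‖ * ENNReal.ofReal ε := by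
            rw [hA, mul_comm]
        _ ≤ ENNReal.ofReal lam * ENNReal.ofReal ε :=
            mul_le_mul' (ENNReal.ofReal_le_ofReal h) le_rfl
    · have i0 : Fin N := ⟨0, hN⟩
      have htop : (⨆ z : E, ENNReal.ofReal (‖A z‖ - lam * ‖z - zhat i0‖)) = ⊤ :=
        aux_sup_top A lam hlam h (zhat i0)
      have hsum : (∑ i, ⨆ z : E, ENNReal.ofReal (‖A z‖ - lam * ‖z - zhat i‖)) = ⊤ := by
        apply ENNReal.sum_eq_top.mpr
        exact ⟨i0, Finset.mem_univ _, htop⟩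
      have hNne : (N : ℝ≥0∞)⁻¹ ≠ 0 := by
        simp [ENNReal.inv_ne_zero]
      rw [hsum, ENNReal.mul_top hNne]
      simp
end
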